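/- arXiv:1805.05114 — 5 statements merged into one kernel-verified Lean document; each statement's English description precedes it below -/
import Mathlib

section
/- Let F be the Fibonacci sequence and G(n) = (n^2+1)(n^2+2). Then for every positive integer n, gcd(F(n), G(n)) = 1. -/
theorem stmt_0 (F G : ℕ → ℤ)
    (hF : ∀ n, F n = (n ^ 2 + 1) * 5 ^ n + (n ^ 2 + 2) * 3 ^ n)
    (hG : ∀ n, G n = (n ^ 2 + 1) * (n ^ 2 + 2)) :
    ∀ n : ℕ, 0 < n → Int.gcd (F n) (G n) = 1 := by
  intro n _
  by_contra h
  obtain ⟨p, hp, hpd⟩ := Nat.exists_prime_and_dvd h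
  have hpZ : Prime (p : ℤ) := Nat.prime_iff_prime_int.mp hp
  have hpF : (p : ℤ) ∣ F n := dvd_trans (Int.natCast_dvd_natCast.mpr hpd) (Int.gcd_dvd_left _ _)
  have hpG : (p : ℤ) ∣ G n := dvd_trans (Int.natCast_dvd_natCast.mpr hpd) (Int.gcd_dvd_right _ _)
  rw [hG] at hpG
  rw [hF] at hpF
  rcases (hpZ.dvd_mul.mp hpG) with h1 | h2
  · -- p ∣ n^2+1, deduce p ∣ 3
    have h3 : (p : ℤ) ∣ ((n:ℤ)^2 + 2) * 3 ^ n := by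
      have h' : (p : ℤ) ∣ ((n:ℤ)^2 + 1) * 5 ^ n := h1.mul_right _
      have := dvd_sub hpF h'
      rw [show ((n:ℤ)^2 + 1) * 5 ^ n + ((n:ℤ)^2 + 2) * 3 ^ n - ((n:ℤ)^2 + 1) * 5 ^ n
          = ((n:ℤ)^2 + 2) * 3 ^ n by ring] at this
      exact this
    rcases hpZ.dvd_mul.mp h3 with h4 | h4
    · -- p ∣ n^2+2 and p ∣ n^2+1, so p ∣ 1
      have : (p : ℤ) ∣ 1 := by
        have := dvd_sub h4 h1
        simpa using this
      exact hp.one_lt.ne' (by exact_mod_cast Int.eq_one_of_dvd_one (by positivity) this)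
    · have hp3 : (p : ℤ) ∣ 3 := hpZ.dvd_of_dvd_pow h4
      have : p = 3 := (Nat.prime_dvd_prime_iff_eq hp (by norm_num)).mp
        (by exact_mod_cast hp3)
      subst this
      have : ((n : ZMod 3)^2 + 1) = 0 := by
        have : ((3:ℤ) : ℤ) ∣ ((n:ℤ)^2 + 1) := by exact_mod_cast h1
        have := (ZMod.intCast_zmod_eq_zero_iff_dvd ((n:ℤ)^2+1) 3).mpr (by exact_mod_cast this)
        push_cast at this
        exact this
      revert this
      have : ∀ x : ZMod 3, x^2 + 1 ≠ 0 := by decide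
      exact this _
  · -- p ∣ n^2+2, deduce p ∣ 5
    have h3 : (p : ℤ) ∣ ((n:ℤ)^2 + 1) * 5 ^ n := by
      have h' : (p : ℤ) ∣ ((n:ℤ)^2 + 2) * 3 ^ n := h2.mul_right _
      have := dvd_sub hpF h'
      rw [show ((n:ℤ)^2 + 1) * 5 ^ n + ((n:ℤ)^2 + 2) * 3 ^ n - ((n:ℤ)^2 + 2) * 3 ^ n
          = ((n:ℤ)^2 + 1) * 5 ^ n by ring] at this
      exact this
    rcases hpZ.dvd_mul.mp h3 with h4 | h4
    · have : (p : ℤ) ∣ 1 := by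
        have := dvd_sub h2 h4
        simpa using this
      exact hp.one_lt.ne' (by exact_mod_cast Int.eq_one_of_dvd_one (by positivity) this)
    · have hp5 : (p : ℤ) ∣ 5 := hpZ.dvd_of_dvd_pow h4
      have : p = 5 := (Nat.prime_dvd_prime_iff_eq hp (by norm_num)).mp
        (by exact_mod_cast hp5)
      subst this
      have : ((n : ZMod 5)^2 + 2) = 0 := by
        have : ((5:ℤ) : ℤ) ∣ ((n:ℤ)^2 + 2) := by exact_mod_cast h2
        have := (ZMod.intCast_zmod_eq_zero_iff_dvd ((n:ℤ)^2+2) 5).mpr (by exact_mod_cast this)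
        push_cast at this
        exact this
      revert this
      have : ∀ x : ZMod 5, x^2 + 2 ≠ 0 := by decide
      exact this _
end

section
/- Let F(n) = (n^2+1)·5^n + (n^2+2)·3^n and G(n) = (n^2+1)(n^2+2). Then gcd(F(n), G(n)) = 1 for all natural numbers n. -/
theorem stmt_1 (F G : ℕ → ℤ)
    (hF : ∀ n, F n = (n ^ 2 + 1) * 5 ^ n + (n ^ 2 + 2) * 3 ^ n)
    (hG : ∀ n, G n = (n ^ 2 + 1) * (n ^ 2 + 2)) :
    ∀ n : ℕ, Int.gcd (F n) (G n) = 1 := by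
  intro n
  set a : ℤ := (n : ℤ) ^ 2 + 1 with ha
  set b : ℤ := (n : ℤ) ^ 2 + 2 with hb
  have hab : IsCoprime a b := ⟨-1, 1, by ring⟩
  have h3 : ¬ (3 : ℤ) ∣ a := by
    intro h
    have h' : ((a : ZMod 3)) = 0 := (ZMod.intCast_zmod_eq_zero_iff_dvd a 3).mpr (by exact_mod_cast h)
    rw [ha] at h'; push_cast at h'
    exact (by decide : ∀ x : ZMod 3, x ^ 2 + 1 ≠ 0) _ h'
  have h5 : ¬ (5 : ℤ) ∣ b := by
    intro h
    have h' : ((b : ZMod 5)) = 0 := (ZMod.intCast_zmod_eq_zero_iff_dvd b 5).mpr (by exact_mod_cast h)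
    rw [hb] at h'; push_cast at h'
    exact (by decide : ∀ x : ZMod 5, x ^ 2 + 2 ≠ 0) _ h'
  have h3a : IsCoprime (3 ^ n : ℤ) a :=
    ((Int.prime_three.coprime_iff_not_dvd.mpr h3)).pow_left
  have h5b : IsCoprime (5 ^ n : ℤ) b :=
    (((by norm_num : Prime (5 : ℤ)).coprime_iff_not_dvd.mpr h5)).pow_left
  have hFa : IsCoprime (F n) a := by
    rw [hF n]
    have : IsCoprime (b * 3 ^ n) a := hab.symm.mul_left h3a
    have := this.add_mul_left_left (5 ^ n)
    rwa [show b * 3 ^ n + a * 5 ^ n = a * 5 ^ n + b * 3 ^ n by ring] at this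
  have hFb : IsCoprime (F n) b := by
    rw [hF n]
    have : IsCoprime (a * 5 ^ n) b := hab.mul_left h5b
    exact this.add_mul_left_left (3 ^ n)
  have : IsCoprime (F n) (G n) := by
    rw [hG n]
    exact hFa.mul_right hFb
  exact Int.isCoprime_iff_gcd_eq_one.mp this
end

section
/- Let ρ : primes → ℕ satisfy ρ(p) ≤ D for all primes p and ρ(p) < p for all p, for some constant D. Then there is a constant c > 0 (depending on ρ and D) such that for all sufficiently large y, ∏_{p ≤ y} (1 − ρ(p)/p) ≥ c / (log y)^D. -/
open Finset Real Nat

private def PP (y : ℕ) : Finset ℕ := (Finset.range (y + 1)).filter Nat.Prime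

private lemma theta_le (n : ℕ) : ∑ p ∈ PP n, Real.log p ≤ n * Real.log 4 := by
  have h1 : ∑ p ∈ PP n, Real.log p = Real.log (primorial n) := by
    rw [primorial, Nat.cast_prod, Real.log_prod]
    · rfl
    · intro p hp
      exact_mod_cast (Nat.Prime.pos (Finset.mem_filter.mp hp).2).ne'
  rw [h1]
  calc Real.log (primorial n) ≤ Real.log ((4:ℕ) ^ n) := by
        apply Real.log_le_log (by exact_mod_cast primorial_pos n)
        exact_mod_cast primorial_le_4_pow n
    _ = n * Real.log 4 := by
        push_cast
        rw [Real.log_pow]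

private lemma fact_factorization_ge {p n : ℕ} (hp : p.Prime) (hpn : p ≤ n) :
    n / p ≤ (n !).factorization p := by
  rw [← Nat.Prime.pow_dvd_iff_le_factorization hp (Nat.factorial_ne_zero n)]
  rw [Nat.Prime.pow_dvd_factorial_iff hp (Nat.lt_succ_self _)]
  have h1 : 1 ∈ Finset.Ico 1 (Nat.log p n + 1) := by
    simp only [Finset.mem_Ico]
    refine ⟨le_refl 1, ?_⟩
    have := Nat.log_pos hp.one_lt hpn
    omega
  calc n / p = n / p ^ 1 := by rw [pow_one]
    _ ≤ ∑ i ∈ Finset.Ico 1 (Nat.log p n + 1), n / p ^ i :=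
        Finset.single_le_sum (f := fun i => n / p ^ i) (fun i _ => Nat.zero_le _) h1

private lemma log_factorial_eq (n : ℕ) :
    Real.log (n !) = ∑ p ∈ (n !).primeFactors, ((n !).factorization p : ℝ) * Real.log p := by
  conv_lhs => rw [← Nat.factorization_prod_pow_eq_self (Nat.factorial_ne_zero n)]
  rw [Finsupp.prod, Nat.cast_prod, Real.log_prod]
  · rw [Nat.support_factorization]
    apply Finset.sum_congr rfl
    intro p hp
    push_cast
    rw [Real.log_pow]
  · intro p hp
    have hq := Nat.prime_of_mem_primeFactors (Nat.support_factorization (n := n !) ▸ hp)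
    have : (0:ℕ) < p ^ (n !).factorization p := pow_pos hq.pos _
    exact_mod_cast this.ne'

private lemma key_sum_le (n : ℕ) (hn : 1 ≤ n) :
    ∑ p ∈ PP n, ((n / p : ℕ) : ℝ) * Real.log p ≤ n * Real.log n := by
  have hsub : PP n ⊆ (n !).primeFactors := by
    intro p hp
    rw [PP, Finset.mem_filter, Finset.mem_range] at hp
    exact Nat.mem_primeFactors.mpr ⟨hp.2, Nat.dvd_factorial hp.2.pos (by omega),
      Nat.factorial_ne_zero n⟩
  calc ∑ p ∈ PP n, ((n / p : ℕ) : ℝ) * Real.log p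
      ≤ ∑ p ∈ PP n, ((n !).factorization p : ℝ) * Real.log p := by
        apply Finset.sum_le_sum
        intro p hp
        have hp' := (Finset.mem_filter.mp hp).2
        apply mul_le_mul_of_nonneg_right _ (Real.log_nonneg (by exact_mod_cast hp'.one_lt.le))
        exact_mod_cast fact_factorization_ge hp' (by
          have := Finset.mem_range.mp (Finset.mem_filter.mp hp).1; omega)
    _ ≤ ∑ p ∈ (n !).primeFactors, ((n !).factorization p : ℝ) * Real.log p := by
        apply Finset.sum_le_sum_of_subset_of_nonneg hsub
        intro p hp _
        have hpp := Nat.prime_of_mem_primeFactors hp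
        have := Real.log_nonneg (by exact_mod_cast hpp.one_lt.le : (1:ℝ) ≤ p)
        positivity
    _ = Real.log (n !) := (log_factorial_eq n).symm
    _ ≤ n * Real.log n := by
        calc Real.log (n !) ≤ Real.log ((n:ℕ) ^ n) := by
              apply Real.log_le_log (by exact_mod_cast Nat.factorial_pos n)
              exact_mod_cast Nat.factorial_le_pow n
          _ = n * Real.log n := by push_cast; rw [Real.log_pow]

private lemma mertens1 (n : ℕ) (hn : 1 ≤ n) :
    ∑ p ∈ PP n, Real.log p / p ≤ Real.log n + Real.log 4 := by
  have theta : ∑ p ∈ PP n, Real.log p ≤ n * Real.log 4 := theta_le n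
  have key := key_sum_le n hn
  have hfloor : ∀ p ∈ PP n, (n : ℝ) * (Real.log p / p) - Real.log p
      ≤ ((n / p : ℕ) : ℝ) * Real.log p := by
    intro p hp
    have hpp := (Finset.mem_filter.mp hp).2
    have hp0 : (0:ℝ) < p := by exact_mod_cast hpp.pos
    have hlog : 0 ≤ Real.log p := Real.log_nonneg (by exact_mod_cast hpp.one_lt.le)
    have hdiv : (n : ℝ) / p - 1 ≤ ((n / p : ℕ) : ℝ) := by
      rw [div_sub_one hp0.ne', div_le_iff₀ hp0]
      have h := Nat.div_add_mod n p
      have h2 := Nat.mod_lt n hpp.pos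
      have : (n:ℝ) = (p:ℝ) * ((n / p : ℕ):ℝ) + ((n % p : ℕ):ℝ) := by exact_mod_cast h.symm
      have h3 : ((n % p : ℕ):ℝ) < (p:ℝ) := by exact_mod_cast h2
      nlinarith
    calc (n : ℝ) * (Real.log p / p) - Real.log p = ((n:ℝ)/p - 1) * Real.log p := by ring
      _ ≤ ((n / p : ℕ) : ℝ) * Real.log p := mul_le_mul_of_nonneg_right hdiv hlog
  have hsum : (n:ℝ) * ∑ p ∈ PP n, Real.log p / p - ∑ p ∈ PP n, Real.log p
      ≤ ∑ p ∈ PP n, ((n / p : ℕ) : ℝ) * Real.log p := by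
    rw [Finset.mul_sum, ← Finset.sum_sub_distrib]
    exact Finset.sum_le_sum hfloor
  have hn0 : (0:ℝ) < n := by exact_mod_cast hn
  have : (n:ℝ) * ∑ p ∈ PP n, Real.log p / p ≤ n * Real.log n + n * Real.log 4 := by
    nlinarith [hsum, key, theta]
  nlinarith [this]

private noncomputable def ff (n : ℕ) : ℝ := if n.Prime then Real.log n / n else 0

private noncomputable def SS (y : ℕ) : ℝ := ∑ n ∈ Finset.Icc 3 y, ff n

private noncomputable def TT (y : ℕ) : ℝ := ∑ n ∈ Finset.Icc 3 y, ff n / Real.log n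

-- Abel summation identity
private lemma abel (y : ℕ) (hy : 3 ≤ y) :
    TT y = SS y / Real.log y
      + ∑ n ∈ Finset.Icc 3 (y - 1), SS n * (1 / Real.log n - 1 / Real.log (n + 1)) := by
  induction y with
  | zero => omega
  | succ z ih =>
    rcases Nat.lt_or_ge z 3 with hz | hz
    · interval_cases z
      · omega
      · omega
      · -- y = 3
        norm_num [TT, SS]
    · have h1 : z + 1 - 1 = z := rfl
      have h2 : Finset.Icc 3 (z + 1) = insert (z + 1) (Finset.Icc 3 z) := by
        rw [← Finset.insert_Icc_right_eq_Icc_add_one (by omega)]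
      have hnot : z + 1 ∉ Finset.Icc 3 z := by simp
      have hTT : TT (z + 1) = TT z + ff (z + 1) / Real.log (z + 1) := by
        rw [TT, TT, h2, Finset.sum_insert hnot]; push_cast; ring
      have hSS : SS (z + 1) = SS z + ff (z + 1) := by
        rw [SS, SS, h2, Finset.sum_insert hnot]; ring
      have h3 : Finset.Icc 3 z = insert z (Finset.Icc 3 (z - 1)) := by
        have hz1 : z = z - 1 + 1 := by omega
        rw [hz1, ← Finset.insert_Icc_right_eq_Icc_add_one (by omega)]
        simp
      have hnot2 : z ∉ Finset.Icc 3 (z - 1) := by simp; omega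
      rw [hTT, ih hz, h1, h3, Finset.sum_insert hnot2, hSS]
      have hlz : Real.log z ≠ 0 := by
        have : (1:ℝ) < z := by exact_mod_cast (by omega : 1 < z)
        exact (Real.log_pos this).ne'
      have hlz1 : Real.log (z + 1) ≠ 0 := by
        have : (1:ℝ) < (z:ℝ) + 1 := by
          have : (0:ℝ) < z := by positivity
          linarith
        exact (Real.log_pos this).ne'
      push_cast
      field_simp
      ring

private noncomputable def FF (t : ℝ) : ℝ := Real.log (Real.log t) - Real.log 4 / Real.log t

private lemma ff_nonneg (n : ℕ) : 0 ≤ ff n := by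
  rw [ff]
  split
  · rename_i h
    have h1 : (1:ℝ) ≤ n := by exact_mod_cast h.one_lt.le
    have := Real.log_nonneg h1
    positivity
  · exact le_refl 0

private lemma SS_nonneg (n : ℕ) : 0 ≤ SS n := Finset.sum_nonneg fun i _ => ff_nonneg i

private lemma sum_ff_eq (y : ℕ) :
    ∑ n ∈ Finset.range (y + 1), ff n = ∑ p ∈ PP y, Real.log p / p := by
  rw [PP, Finset.sum_filter]; rfl

private lemma SS_le (n : ℕ) (hn : 3 ≤ n) : SS n ≤ Real.log n + Real.log 4 := by
  have h1 : SS n ≤ ∑ m ∈ Finset.range (n + 1), ff m := by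
    apply Finset.sum_le_sum_of_subset_of_nonneg
    · intro m hm
      simp only [Finset.mem_Icc] at hm
      simp only [Finset.mem_range]
      omega
    · intro m _ _
      exact ff_nonneg m
  rw [sum_ff_eq] at h1
  exact h1.trans (mertens1 n (by omega))

-- telescoping
private lemma telescope (y : ℕ) (hy : 3 ≤ y) :
    ∑ n ∈ Finset.Icc 3 (y - 1), (FF ((n:ℝ) + 1) - FF n) = FF y - FF 3 := by
  induction y with
  | zero => omega
  | succ z ih =>
    rcases Nat.lt_or_ge z 3 with hz | hz
    · interval_cases z
      · omega
      · omega
      · -- y = 3, Icc 3 2 empty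
        norm_num
    · have h1 : z + 1 - 1 = z := rfl
      have h3 : Finset.Icc 3 z = insert z (Finset.Icc 3 (z - 1)) := by
        have hz1 : z = z - 1 + 1 := by omega
        rw [hz1, ← Finset.insert_Icc_right_eq_Icc_add_one (by omega)]
        simp
      rw [h1, h3, Finset.sum_insert (by simp; omega), ih hz]
      have : ((z:ℝ) - 1 + 1) = z := by ring
      push_cast
      ring

private lemma term_bound (n : ℕ) (hn : 3 ≤ n) :
    SS n * (1 / Real.log n - 1 / Real.log ((n:ℝ) + 1)) ≤ FF ((n:ℝ) + 1) - FF n := by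
  set L0 := Real.log n with hL0
  set L1 := Real.log ((n:ℝ) + 1) with hL1
  have hn1 : (1:ℝ) < n := by exact_mod_cast (by omega : 1 < n)
  have h0 : 0 < L0 := Real.log_pos hn1
  have h1 : L0 ≤ L1 := Real.log_le_log (by linarith) (by linarith)
  have h1' : 0 < L1 := lt_of_lt_of_le h0 h1
  have hmono : 0 ≤ 1 / L0 - 1 / L1 := by
    have := one_div_le_one_div_of_le h0 h1
    linarith
  have step1 : SS n * (1 / L0 - 1 / L1) ≤ (L0 + Real.log 4) * (1 / L0 - 1 / L1) := by
    apply mul_le_mul_of_nonneg_right _ hmono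
    exact SS_le n hn
  have e1 : (L0 + Real.log 4) * (1 / L0 - 1 / L1)
      = (1 - L0 / L1) + Real.log 4 * (1 / L0 - 1 / L1) := by
    field_simp
  have claim : 1 - L0 / L1 ≤ Real.log L1 - Real.log L0 := by
    have hlog := Real.log_le_sub_one_of_pos (show (0:ℝ) < L0 / L1 by positivity)
    rw [Real.log_div h0.ne' h1'.ne'] at hlog
    linarith
  have e2 : FF ((n:ℝ) + 1) - FF n
      = (Real.log L1 - Real.log L0) + Real.log 4 * (1 / L0 - 1 / L1) := by
    rw [FF, FF, ← hL0, ← hL1]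
    field_simp
    ring
  rw [e2]
  calc SS n * (1 / L0 - 1 / L1) ≤ (L0 + Real.log 4) * (1 / L0 - 1 / L1) := step1
    _ = (1 - L0 / L1) + Real.log 4 * (1 / L0 - 1 / L1) := e1
    _ ≤ (Real.log L1 - Real.log L0) + Real.log 4 * (1 / L0 - 1 / L1) := by linarith

private lemma mertens2 (y : ℕ) (hy : 3 ≤ y) :
    TT y ≤ Real.log (Real.log y) + (1 - FF 3) := by
  have hy1 : (1:ℝ) < y := by exact_mod_cast (by omega : 1 < y)
  have hly : 0 < Real.log y := Real.log_pos hy1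
  have habel := abel y hy
  have hterm : ∑ n ∈ Finset.Icc 3 (y - 1), SS n * (1 / Real.log n - 1 / Real.log (n + 1))
      ≤ ∑ n ∈ Finset.Icc 3 (y - 1), (FF ((n:ℝ) + 1) - FF n) := by
    apply Finset.sum_le_sum
    intro n hn
    have h3n : 3 ≤ n := (Finset.mem_Icc.mp hn).1
    exact term_bound n h3n
  rw [telescope y hy] at hterm
  have hSSy : SS y / Real.log y ≤ (Real.log y + Real.log 4) / Real.log y :=
    div_le_div_of_nonneg_right (SS_le y hy) hly.le |>.trans_eq rfl
  have e3 : (Real.log y + Real.log 4) / Real.log y = 1 + Real.log 4 / Real.log y := by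
    field_simp
  have e4 : FF y = Real.log (Real.log y) - Real.log 4 / Real.log y := rfl
  rw [habel]
  calc SS y / Real.log y + ∑ n ∈ Finset.Icc 3 (y - 1), SS n * (1 / Real.log n - 1 / Real.log (n + 1))
      ≤ (1 + Real.log 4 / Real.log y) + (FF y - FF 3) := by
        rw [← e3]
        exact add_le_add hSSy hterm
    _ = Real.log (Real.log y) + (1 - FF 3) := by rw [e4]; ring

private lemma primes_recip (y : ℕ) (hy : 3 ≤ y) :
    ∑ p ∈ PP y, (1:ℝ) / p ≤ Real.log (Real.log y) + (3/2 - FF 3) := by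
  have key : ∑ p ∈ PP y, (1:ℝ) / p = 1/2 + TT y := by
    have e1 : ∑ p ∈ PP y, (1:ℝ) / p
        = ∑ n ∈ Finset.range (y + 1), (if n.Prime then (1:ℝ)/n else 0) := by
      rw [PP, Finset.sum_filter]
    have e2 : Finset.range (y + 1) = Finset.Ico 0 (y + 1) := by
      rw [Finset.range_eq_Ico]
    have e3 : ∑ n ∈ Finset.Ico 0 (y+1), (if n.Prime then (1:ℝ)/n else 0)
        = ∑ n ∈ Finset.Ico (0:ℕ) 3, (if n.Prime then (1:ℝ)/n else 0)
          + ∑ n ∈ Finset.Ico (3:ℕ) (y+1), (if n.Prime then (1:ℝ)/n else 0) :=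
      (Finset.sum_Ico_consecutive _ (by omega) (by omega)).symm
    have e4 : ∑ n ∈ Finset.Ico (0:ℕ) 3, (if n.Prime then (1:ℝ)/n else 0) = 1/2 := by
      rw [Finset.sum_Ico_eq_sum_range]
      norm_num [Finset.sum_range_succ]
    have e5 : ∑ n ∈ Finset.Ico (3:ℕ) (y+1), (if n.Prime then (1:ℝ)/n else 0) = TT y := by
      rw [Finset.Ico_add_one_right_eq_Icc, TT]
      apply Finset.sum_congr rfl
      intro n hn
      have h3n : 3 ≤ n := (Finset.mem_Icc.mp hn).1
      have hln : Real.log n ≠ 0 := by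
        have : (1:ℝ) < n := by exact_mod_cast (by omega : 1 < n)
        exact (Real.log_pos this).ne'
      rw [ff]
      split
      · rw [div_div, mul_comm, ← div_div, div_self hln]
      · simp
    rw [e1, e2, e3, e4, e5]
  rw [key]
  have := mertens2 y hy
  linarith

private lemma sq_recip_bound (y : ℕ) : ∑ n ∈ Finset.Icc 2 y, (1:ℝ) / (n:ℝ)^2 ≤ 1 := by
  have H : ∀ z : ℕ, 1 ≤ z → ∑ n ∈ Finset.Icc 2 z, (1:ℝ) / (n:ℝ)^2 ≤ 1 - 1/(z:ℝ) := by
    intro z hz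
    induction z with
    | zero => omega
    | succ w ih =>
      rcases Nat.lt_or_ge w 1 with hw | hw
      · interval_cases w
        · norm_num
      · have h2 : Finset.Icc 2 (w + 1) = insert (w + 1) (Finset.Icc 2 w) := by
          rw [← Finset.insert_Icc_right_eq_Icc_add_one (by omega)]
        rw [h2, Finset.sum_insert (by simp)]
        have hww : (0:ℝ) < w := by exact_mod_cast hw
        have hw1 : (0:ℝ) < (w:ℝ) + 1 := by linarith
        have key : (1:ℝ)/((w:ℝ)+1)^2 ≤ 1/(w:ℝ) - 1/((w:ℝ)+1) := by
          rw [div_sub_div _ _ hww.ne' hw1.ne']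
          rw [div_le_div_iff₀ (by positivity) (by positivity)]
          ring_nf
          nlinarith
        have := ih hw
        push_cast
        linarith
  rcases Nat.lt_or_ge y 1 with hy | hy
  · interval_cases y <;> norm_num
  · have := H y hy
    have hy0 : (0:ℝ) < y := by exact_mod_cast hy
    have : (0:ℝ) ≤ 1/(y:ℝ) := by positivity
    linarith [H y hy]

private lemma primes_sq_recip (y : ℕ) : ∑ p ∈ PP y, (1:ℝ) / (p:ℝ)^2 ≤ 1 := by
  refine le_trans ?_ (sq_recip_bound y)
  apply Finset.sum_le_sum_of_subset_of_nonneg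
  · intro p hp
    rw [PP, Finset.mem_filter, Finset.mem_range] at hp
    rw [Finset.mem_Icc]
    exact ⟨hp.2.two_le, by omega⟩
  · intro p _ _
    positivity

private lemma one_sub_ge {x : ℝ} (h0 : 0 ≤ x) (h2 : x ≤ 1/2) :
    Real.exp (-(x + 2*x^2)) ≤ 1 - x := by
  have hx1 : 0 < 1 - x := by linarith
  rw [← Real.exp_log hx1]
  apply Real.exp_le_exp.mpr
  have hlog := Real.log_le_sub_one_of_pos (show (0:ℝ) < (1-x)⁻¹ by positivity)
  rw [Real.log_inv] at hlog
  have h3 : (1-x)⁻¹ - 1 = x / (1-x) := by field_simp; ring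
  rw [h3] at hlog
  have h4 : x / (1-x) ≤ x + 2*x^2 := by
    rw [div_le_iff₀ hx1]
    nlinarith
  linarith

theorem stmt_12 (ρ : ℕ → ℕ) (D : ℕ)
    (hρD : ∀ p : ℕ, p.Prime → ρ p ≤ D)
    (hρp : ∀ p : ℕ, p.Prime → ρ p < p) :
    ∃ c : ℝ, 0 < c ∧ ∃ y₀ : ℕ, ∀ y : ℕ, y₀ ≤ y →
      c / (Real.log y) ^ D ≤
        ∏ p ∈ (Finset.range (y + 1)).filter Nat.Prime, (1 - (ρ p : ℝ) / p) := by
  set C₂ : ℝ := 3/2 - FF 3 with hC₂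
  set Q : ℝ := ∏ p ∈ PP (2*D+1), (1 - (ρ p : ℝ) / p) with hQ
  have factor_pos : ∀ p : ℕ, p.Prime → (0:ℝ) < 1 - (ρ p : ℝ) / p := by
    intro p hp
    have hp0 : (0:ℝ) < p := by exact_mod_cast hp.pos
    have : (ρ p : ℝ) / p < 1 := by
      rw [div_lt_one hp0]
      exact_mod_cast hρp p hp
    linarith
  have hQpos : 0 < Q := by
    apply Finset.prod_pos
    intro p hp
    exact factor_pos p (Finset.mem_filter.mp hp).2
  refine ⟨Q * Real.exp (-((D:ℝ) * C₂ + 2*(D:ℝ)^2)), by positivity, 2*D + 4, ?_⟩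
  intro y hy
  have hy3 : 3 ≤ y := by omega
  have hy1 : (1:ℝ) < y := by exact_mod_cast (by omega : 1 < y)
  have hly : 0 < Real.log y := Real.log_pos hy1
  set LL : ℝ := Real.log (Real.log y) with hLL
  -- split the product
  have hsplit : ∏ p ∈ PP y, (1 - (ρ p : ℝ) / p)
      = Q * ∏ p ∈ (PP y).filter (fun p => ¬ p ≤ 2*D+1), (1 - (ρ p : ℝ) / p) := by
    rw [hQ]
    have : (PP y).filter (fun p => p ≤ 2*D+1) = PP (2*D+1) := by
      ext p
      simp only [PP, Finset.mem_filter, Finset.mem_range]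
      constructor
      · rintro ⟨⟨_, hp⟩, h⟩; exact ⟨by omega, hp⟩
      · rintro ⟨h, hp⟩; exact ⟨⟨by omega, hp⟩, by omega⟩
    rw [← this, Finset.prod_filter_mul_prod_filter_not]
  -- bound the large-prime product from below
  have hlarge : Real.exp (-((D:ℝ) * (∑ p ∈ PP y, (1:ℝ)/p) + 2*(D:ℝ)^2 * (∑ p ∈ PP y, (1:ℝ)/(p:ℝ)^2)))
      ≤ ∏ p ∈ (PP y).filter (fun p => ¬ p ≤ 2*D+1), (1 - (ρ p : ℝ) / p) := by
    have step1 : ∀ p ∈ (PP y).filter (fun p => ¬ p ≤ 2*D+1),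
        Real.exp (-((ρ p : ℝ)/p + 2*((ρ p : ℝ)/p)^2)) ≤ 1 - (ρ p : ℝ) / p := by
      intro p hp
      obtain ⟨hpPP, hplarge⟩ := Finset.mem_filter.mp hp
      have hpp := (Finset.mem_filter.mp hpPP).2
      have hp0 : (0:ℝ) < p := by exact_mod_cast hpp.pos
      have hρle : (ρ p : ℝ) ≤ D := by exact_mod_cast hρD p hpp
      have hplb : (2*(D:ℝ)+2) ≤ p := by
        have : 2*D+2 ≤ p := by omega
        exact_mod_cast this
      apply one_sub_ge
      · positivity
      · rw [div_le_iff₀ hp0]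
        nlinarith
    calc Real.exp (-((D:ℝ) * (∑ p ∈ PP y, (1:ℝ)/p) + 2*(D:ℝ)^2 * (∑ p ∈ PP y, (1:ℝ)/(p:ℝ)^2)))
        ≤ Real.exp (∑ p ∈ (PP y).filter (fun p => ¬ p ≤ 2*D+1), (-((ρ p : ℝ)/p + 2*((ρ p : ℝ)/p)^2))) := by
          apply Real.exp_le_exp.mpr
          rw [neg_le, ← Finset.sum_neg_distrib]
          simp only [neg_neg]
          calc ∑ p ∈ (PP y).filter (fun p => ¬ p ≤ 2*D+1), ((ρ p : ℝ)/p + 2*((ρ p : ℝ)/p)^2)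
              ≤ ∑ p ∈ PP y, ((ρ p : ℝ)/p + 2*((ρ p : ℝ)/p)^2) := by
                apply Finset.sum_le_sum_of_subset_of_nonneg (Finset.filter_subset _ _)
                intro p hp _
                have hp0 : (0:ℝ) < p := by exact_mod_cast (Finset.mem_filter.mp hp).2.pos
                positivity
            _ ≤ ∑ p ∈ PP y, ((D:ℝ) * (1/(p:ℝ)) + 2*(D:ℝ)^2 * (1/(p:ℝ)^2)) := by
                apply Finset.sum_le_sum
                intro p hp
                have hpp := (Finset.mem_filter.mp hp).2
                have hp0 : (0:ℝ) < p := by exact_mod_cast hpp.pos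
                have hρle : (ρ p : ℝ) ≤ D := by exact_mod_cast hρD p hpp
                have hρ0 : (0:ℝ) ≤ ρ p := by positivity
                have h1 : (ρ p : ℝ)/p ≤ (D:ℝ) * (1/p) := by
                  rw [mul_one_div]
                  exact div_le_div_of_nonneg_right hρle hp0.le |>.trans_eq rfl
                have h2 : ((ρ p : ℝ)/p)^2 ≤ (D:ℝ)^2 * (1/(p:ℝ)^2) := by
                  rw [div_pow, mul_one_div]
                  apply div_le_div_of_nonneg_right _ (by positivity)
                  exact pow_le_pow_left₀ hρ0 hρle 2
                nlinarith
            _ = (D:ℝ) * (∑ p ∈ PP y, (1:ℝ)/p) + 2*(D:ℝ)^2 * (∑ p ∈ PP y, (1:ℝ)/(p:ℝ)^2) := by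
                rw [Finset.sum_add_distrib, ← Finset.mul_sum, ← Finset.mul_sum]
      _ = ∏ p ∈ (PP y).filter (fun p => ¬ p ≤ 2*D+1), Real.exp (-((ρ p : ℝ)/p + 2*((ρ p : ℝ)/p)^2)) := by
          rw [← Real.exp_sum]
      _ ≤ ∏ p ∈ (PP y).filter (fun p => ¬ p ≤ 2*D+1), (1 - (ρ p : ℝ) / p) := by
          apply Finset.prod_le_prod
          · intro p _; positivity
          · exact step1
  -- combine with Mertens bounds
  have hmert := primes_recip y hy3
  have hsq := primes_sq_recip y
  have hD0 : (0:ℝ) ≤ (D:ℝ) := by positivity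
  have hexp : Real.exp (-((D:ℝ) * (LL + C₂) + 2*(D:ℝ)^2))
      ≤ Real.exp (-((D:ℝ) * (∑ p ∈ PP y, (1:ℝ)/p) + 2*(D:ℝ)^2 * (∑ p ∈ PP y, (1:ℝ)/(p:ℝ)^2))) := by
    apply Real.exp_le_exp.mpr
    have h1 : (D:ℝ) * (∑ p ∈ PP y, (1:ℝ)/p) ≤ (D:ℝ) * (LL + C₂) :=
      mul_le_mul_of_nonneg_left hmert hD0
    have h2 : 2*(D:ℝ)^2 * (∑ p ∈ PP y, (1:ℝ)/(p:ℝ)^2) ≤ 2*(D:ℝ)^2 * 1 :=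
      mul_le_mul_of_nonneg_left hsq (by positivity)
    nlinarith
  -- rewrite c / (log y)^D
  have hpow : (Real.log y) ^ D = Real.exp ((D:ℝ) * LL) := by
    rw [Real.exp_nat_mul, hLL, Real.exp_log hly]
  have hrw : Q * Real.exp (-((D:ℝ) * C₂ + 2*(D:ℝ)^2)) / (Real.log y) ^ D
      = Q * Real.exp (-((D:ℝ) * (LL + C₂) + 2*(D:ℝ)^2)) := by
    rw [hpow, mul_div_assoc, ← Real.exp_sub]
    congr 2
    ring
  rw [hrw]
  calc Q * Real.exp (-((D:ℝ) * (LL + C₂) + 2*(D:ℝ)^2))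
      ≤ Q * Real.exp (-((D:ℝ) * (∑ p ∈ PP y, (1:ℝ)/p) + 2*(D:ℝ)^2 * (∑ p ∈ PP y, (1:ℝ)/(p:ℝ)^2))) :=
        mul_le_mul_of_nonneg_left hexp hQpos.le
    _ ≤ Q * ∏ p ∈ (PP y).filter (fun p => ¬ p ≤ 2*D+1), (1 - (ρ p : ℝ) / p) :=
        mul_le_mul_of_nonneg_left hlarge hQpos.le
    _ = ∏ p ∈ PP y, (1 - (ρ p : ℝ) / p) := hsplit.symm
    _ = ∏ p ∈ (Finset.range (y + 1)).filter Nat.Prime, (1 - (ρ p : ℝ) / p) := rfl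
end

section
/- Let r ≥ 1 and γ = 1/(r+1), and suppose P is a set of primes with counting function #P(x) ≪ x^{rγ}/log x for x ≥ 2^{1/γ}, and T : primes → ℕ ∪ {∞} satisfies T(p) ≥ p^γ for all primes p ∉ P. Then for all sufficiently large y, ∑_{p > y} 1/(p·T(p)) ≪ y^{−1/(r+1)}. -/
open Finset

private lemma key_ineq {γ : ℝ} (hγ0 : 0 < γ) (hγ1 : γ ≤ 1) {x : ℝ} (hx : 1 ≤ x) :
    γ * (x + 1) ^ (-1 - γ) ≤ x ^ (-γ) - (x + 1) ^ (-γ) := by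
  have hx0 : 0 < x := lt_of_lt_of_le one_pos hx
  have hx1 : (0:ℝ) < x + 1 := by linarith
  set s : ℝ := 1 / (x + 1) with hs
  have hs0 : 0 < s := by positivity
  have hs1 : s < 1 := by rw [hs, div_lt_one hx1]; linarith
  have hb : (1 - s) ^ γ ≤ 1 - γ * s := by
    have := rpow_one_add_le_one_add_mul_self (s := -s) (by linarith) hγ0.le hγ1
    simpa [mul_neg, sub_eq_add_neg] using this
  have h1s : (0:ℝ) < 1 - s := by linarith
  have hbpos : (0:ℝ) < 1 - γ * s := by nlinarith
  have h2 : (1 - s) ^ γ ≤ (1 + γ * s)⁻¹ := by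
    refine hb.trans ?_
    rw [inv_eq_one_div, le_div_iff₀ (by nlinarith)]
    nlinarith [sq_nonneg (γ * s)]
  have hb' : 1 + γ * s ≤ (1 - s) ^ (-γ) := by
    rw [Real.rpow_neg h1s.le]
    calc 1 + γ * s = ((1 + γ * s)⁻¹)⁻¹ := (inv_inv _).symm
      _ ≤ ((1 - s) ^ γ)⁻¹ :=
        inv_anti₀ (Real.rpow_pos_of_pos h1s γ) h2
  have hxx : x = (x + 1) * (1 - s) := by rw [hs, mul_sub, mul_one_div_cancel hx1.ne']; ring
  have e1 : x ^ (-γ) = (x + 1) ^ (-γ) * (1 - s) ^ (-γ) := by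
    nth_rewrite 1 [hxx]
    rw [Real.mul_rpow hx1.le h1s.le]
  have e2 : (x + 1) ^ (-1 - γ) = (x + 1) ^ (-γ) * s := by
    rw [hs, show (-1 - γ) = (-γ) + (-1) by ring, Real.rpow_add hx1, Real.rpow_neg_one,
      one_div]
  have hA : 0 < (x + 1) ^ (-γ) := Real.rpow_pos_of_pos hx1 _
  have hm := mul_le_mul_of_nonneg_left hb' hA.le
  rw [e1, e2]
  nlinarith [hm]

-- tail bound over Ioc by induction
private lemma tail_Ioc {γ : ℝ} (hγ0 : 0 < γ) (hγ1 : γ ≤ 1) {y : ℕ} (hy : 1 ≤ y) :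
    ∀ N : ℕ, y ≤ N →
      ∑ n ∈ Finset.Ioc y N, (n : ℝ) ^ (-1 - γ)
        ≤ (1 / γ) * ((y : ℝ) ^ (-γ) - (N : ℝ) ^ (-γ)) := by
  refine Nat.le_induction ?_ ?_
  · simp
  · intro N hN ih
    rw [Finset.sum_Ioc_succ_top hN]
    have hx : (1:ℝ) ≤ (N : ℝ) := by exact_mod_cast hy.trans hN
    have hk := key_ineq hγ0 hγ1 hx
    have : ((N + 1 : ℕ) : ℝ) = (N : ℝ) + 1 := by push_cast; ring
    rw [this]
    have h3 : ((N:ℝ) + 1) ^ (-1 - γ) ≤ (1/γ) * ((N:ℝ) ^ (-γ) - ((N:ℝ)+1) ^ (-γ)) := by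
      have hm := mul_le_mul_of_nonneg_left hk (le_of_lt (by positivity : (0:ℝ) < 1/γ))
      calc ((N:ℝ)+1) ^ (-1-γ) = (1/γ) * (γ * ((N:ℝ)+1) ^ (-1-γ)) := by field_simp
        _ ≤ _ := hm
    linarith [ih]

private lemma tail_finset {γ : ℝ} (hγ0 : 0 < γ) (hγ1 : γ ≤ 1) {y : ℕ} (hy : 1 ≤ y)
    (u : Finset ℕ) (hu : ∀ n ∈ u, y < n) :
    ∑ n ∈ u, (n : ℝ) ^ (-1 - γ) ≤ (1 / γ) * (y : ℝ) ^ (-γ) := by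
  have hsub : u ⊆ Finset.Ioc y (u.sup id) := by
    intro n hn
    exact Finset.mem_Ioc.mpr ⟨hu n hn, Finset.le_sup (f := id) hn⟩
  have h1 : ∑ n ∈ u, (n : ℝ) ^ (-1 - γ) ≤ ∑ n ∈ Finset.Ioc y (u.sup id), (n : ℝ) ^ (-1 - γ) :=
    Finset.sum_le_sum_of_subset_of_nonneg hsub (fun n _ _ => by positivity)
  rcases le_or_gt y (u.sup id) with h | h
  · refine h1.trans ((tail_Ioc hγ0 hγ1 hy _ h).trans ?_)
    have : (0:ℝ) ≤ ((u.sup id : ℕ) : ℝ) ^ (-γ) := by positivity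
    have hyp : (0:ℝ) < (1/γ) := by positivity
    nlinarith
  · rw [Finset.Ioc_eq_empty (by omega)] at h1
    simp only [Finset.sum_empty] at h1
    have : (0:ℝ) ≤ (1 / γ) * (y : ℝ) ^ (-γ) := by positivity
    linarith

-- telescoping
private lemma tele (f : ℕ → ℝ) : ∀ (M p : ℕ), p ≤ M →
    ∑ n ∈ Finset.Ico p M, (f n - f (n + 1)) = f p - f M := by
  intro M
  induction M with
  | zero => intro p hp; simp [Nat.le_zero.mp hp]
  | succ M ih =>
    intro p hp
    rcases Nat.lt_or_ge p (M + 1) with h | h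
    · have hpM : p ≤ M := by omega
      rw [Finset.sum_Ico_succ_top hpM, ih p hpM]; ring
    · have : p = M + 1 := by omega
      simp [this]

private lemma ppart {γ C : ℝ} (hγ0 : 0 < γ) (hγ1 : γ ≤ 1) (hC : 0 < C)
    {r : ℕ} (P : Set ℕ)
    (hPcount : ∀ x : ℕ, (2:ℝ) ^ (1/γ) ≤ x →
      ((P ∩ Set.Iic x).ncard : ℝ) ≤ C * (x:ℝ) ^ ((r:ℝ) * γ) / Real.log x)
    (hrγ : (r:ℝ) * γ = 1 - γ)
    (hγinv : 1/γ = (r:ℝ) + 1) (hr : 1 ≤ r)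
    {y : ℕ} (hy : 2 ^ (r+1) ≤ y)
    (u : Finset ℕ) (huP : ∀ p ∈ u, p ∈ P) (huy : ∀ p ∈ u, y < p) :
    ∑ p ∈ u, ((p:ℝ))⁻¹ ≤ (C + C / γ) * (y:ℝ) ^ (-γ) := by
  classical
  have hy4 : 4 ≤ y := by
    have h1 : (4:ℕ) ≤ 2 ^ (r+1) := by
      calc (4:ℕ) = 2 ^ 2 := rfl
        _ ≤ 2 ^ (r+1) := Nat.pow_le_pow_right (by norm_num) (by omega)
    exact le_trans h1 hy
  have hy1 : 1 ≤ y := by omega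
  -- counting bound without log
  have hcount : ∀ n : ℕ, y ≤ n → ((P ∩ Set.Iic n).ncard : ℝ) ≤ C * (n:ℝ) ^ (1 - γ) := by
    intro n hn
    have hn4 : 4 ≤ n := le_trans hy4 hn
    have h2n : (2:ℝ) ^ (1/γ) ≤ n := by
      rw [hγinv]
      have : ((2:ℝ) ^ ((r:ℝ) + 1)) = ((2 ^ (r+1) : ℕ) : ℝ) := by
        push_cast
        rw [← Real.rpow_natCast 2 (r+1)]
        push_cast
        ring_nf
      rw [this]
      exact_mod_cast le_trans hy hn
    have hlog : 1 ≤ Real.log n := by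
      rw [Real.le_log_iff_exp_le (by positivity)]
      calc Real.exp 1 ≤ 2.7182818286 := Real.exp_one_lt_d9.le
        _ ≤ (4:ℝ) := by norm_num
        _ ≤ (n:ℝ) := by exact_mod_cast hn4
    calc ((P ∩ Set.Iic n).ncard : ℝ) ≤ C * (n:ℝ) ^ ((r:ℝ) * γ) / Real.log n :=
          hPcount n h2n
      _ ≤ C * (n:ℝ) ^ ((r:ℝ) * γ) := div_le_self (by positivity) hlog
      _ = C * (n:ℝ) ^ (1 - γ) := by rw [hrγ]
  -- card bound for subsets
  have hcard : ∀ (v : Finset ℕ) (n : ℕ), y ≤ n → (∀ p ∈ v, p ∈ P ∧ p ≤ n) →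
      (v.card : ℝ) ≤ C * (n:ℝ) ^ (1 - γ) := by
    intro v n hn hv
    refine le_trans ?_ (hcount n hn)
    have hfin : (P ∩ Set.Iic n).Finite := (Set.finite_Iic n).inter_of_right _
    have hsub : (↑v : Set ℕ) ⊆ P ∩ Set.Iic n := by
      intro p hp
      obtain ⟨h1, h2⟩ := hv p (by exact_mod_cast hp)
      exact ⟨h1, h2⟩
    have := Set.ncard_le_ncard hsub hfin
    rw [Set.ncard_coe_finset] at this
    exact_mod_cast this
  rcases u.eq_empty_or_nonempty with rfl | hne
  · simp; positivity
  set N := u.sup id with hN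
  have hNy : y < N := by
    obtain ⟨p, hp⟩ := hne
    exact lt_of_lt_of_le (huy p hp) (Finset.le_sup (f := id) hp)
  set M := N + 1 with hM
  set d : ℕ → ℝ := fun n => (n:ℝ)⁻¹ - ((n:ℝ) + 1)⁻¹ with hd
  have hdnn : ∀ n : ℕ, 1 ≤ n → 0 ≤ d n := by
    intro n hn
    have : (0:ℝ) < n := by exact_mod_cast hn
    simp only [hd, sub_nonneg]
    apply inv_anti₀ this (by linarith)
  -- rewrite each term
  have step1 : ∑ p ∈ u, ((p:ℝ))⁻¹
      = u.card • ((M:ℝ))⁻¹ + ∑ p ∈ u, ∑ n ∈ Finset.Ico p M, d n := by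
    rw [← Finset.sum_const, ← Finset.sum_add_distrib]
    refine Finset.sum_congr rfl (fun p hp => ?_)
    have hpN : p ≤ N := Finset.le_sup (f := id) hp
    have hpM : p ≤ M := by omega
    have := tele (fun n => ((n:ℝ))⁻¹) M p hpM
    have hcast : ∀ n : ℕ, (((n+1:ℕ):ℝ))⁻¹ = ((n:ℝ) + 1)⁻¹ := by intro n; push_cast; ring_nf
    simp only [hcast] at this
    have h2 : ∑ n ∈ Finset.Ico p M, d n = ((p:ℝ))⁻¹ - ((N:ℝ) + 1)⁻¹ := by
      have e : ((M:ℝ)) = (N:ℝ) + 1 := by rw [hM]; push_cast; ring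
      rw [← e]; exact this
    have hMc : ((M:ℝ)) = (N:ℝ) + 1 := by rw [hM]; push_cast; ring
    rw [h2, hMc]
    ring
  -- swap summation
  have step2 : ∑ p ∈ u, ∑ n ∈ Finset.Ico p M, d n
      = ∑ n ∈ Finset.Ico (y+1) M, ((u.filter (fun p => p ≤ n)).card : ℝ) * d n := by
    have h1 : ∀ p ∈ u, ∑ n ∈ Finset.Ico p M, d n
        = ∑ n ∈ Finset.Ico (y+1) M, (if p ≤ n then d n else 0) := by
      intro p hp
      rw [← Finset.sum_filter]
      congr 1
      ext n
      simp only [Finset.mem_Ico, Finset.mem_filter]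
      have := huy p hp
      omega
    rw [Finset.sum_congr rfl h1, Finset.sum_comm]
    refine Finset.sum_congr rfl (fun n _ => ?_)
    rw [← Finset.sum_filter, Finset.sum_const, nsmul_eq_mul]
  -- bound the swapped sum termwise
  have step3 : ∀ n ∈ Finset.Ico (y+1) M,
      ((u.filter (fun p => p ≤ n)).card : ℝ) * d n ≤ C * (n:ℝ) ^ (-1 - γ) := by
    intro n hn
    rw [Finset.mem_Ico] at hn
    have hn1 : y ≤ n := by omega
    have hnpos : (0:ℝ) < n := by exact_mod_cast (by omega : 0 < n)
    have hc : ((u.filter (fun p => p ≤ n)).card : ℝ) ≤ C * (n:ℝ) ^ (1 - γ) := by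
      refine hcard _ n hn1 (fun p hp => ?_)
      rw [Finset.mem_filter] at hp
      exact ⟨huP p hp.1, hp.2⟩
    have hdle : d n ≤ ((n:ℝ) ^ (2:ℕ))⁻¹ := by
      have h1 : d n = ((n:ℝ) * ((n:ℝ)+1))⁻¹ := by
        simp only [hd]
        rw [inv_sub_inv (by positivity) (by positivity)]
        ring_nf
      rw [h1]
      apply inv_anti₀ (by positivity)
      rw [pow_two]
      nlinarith
    calc ((u.filter (fun p => p ≤ n)).card : ℝ) * d n
        ≤ (C * (n:ℝ) ^ (1 - γ)) * ((n:ℝ) ^ (2:ℕ))⁻¹ := by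
          apply mul_le_mul hc hdle (hdnn n (by omega)) (by positivity)
      _ = C * (n:ℝ) ^ (-1 - γ) := by
          rw [← Real.rpow_natCast (n:ℝ) 2, ← Real.rpow_neg hnpos.le,
            mul_assoc, ← Real.rpow_add hnpos, show (1:ℝ) - γ + -(2:ℕ) = -1 - γ by push_cast; ring]
  -- boundary term
  have step4 : (u.card : ℝ) * ((M:ℝ))⁻¹ ≤ C * (y:ℝ) ^ (-γ) := by
    have hNpos : (0:ℝ) < N := by exact_mod_cast (by omega : 0 < N)
    have hcu : (u.card : ℝ) ≤ C * (N:ℝ) ^ (1 - γ) := by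
      refine hcard u N (by omega) (fun p hp => ⟨huP p hp, Finset.le_sup (f := id) hp⟩)
    have hMN : ((M:ℝ))⁻¹ ≤ ((N:ℝ))⁻¹ := by
      apply inv_anti₀ hNpos
      simp only [hM]; push_cast; linarith
    calc (u.card : ℝ) * ((M:ℝ))⁻¹ ≤ (C * (N:ℝ) ^ (1 - γ)) * ((N:ℝ))⁻¹ := by
          apply mul_le_mul hcu hMN (by positivity) (by positivity)
      _ = C * (N:ℝ) ^ (-γ) := by
          rw [← Real.rpow_neg_one (N:ℝ), mul_assoc, ← Real.rpow_add hNpos,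
            show (1:ℝ) - γ + -1 = -γ by ring]
      _ ≤ C * (y:ℝ) ^ (-γ) := by
          apply mul_le_mul_of_nonneg_left _ hC.le
          apply Real.rpow_le_rpow_of_nonpos (by exact_mod_cast hy1) (by exact_mod_cast hNy.le)
            (by linarith)
  -- put it together
  rw [step1, step2, nsmul_eq_mul]
  have htail : ∑ n ∈ Finset.Ico (y+1) M, ((u.filter (fun p => p ≤ n)).card : ℝ) * d n
      ≤ (C / γ) * (y:ℝ) ^ (-γ) := by
    calc ∑ n ∈ Finset.Ico (y+1) M, ((u.filter (fun p => p ≤ n)).card : ℝ) * d n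
        ≤ ∑ n ∈ Finset.Ico (y+1) M, C * (n:ℝ) ^ (-1 - γ) := Finset.sum_le_sum step3
      _ = C * ∑ n ∈ Finset.Ico (y+1) M, (n:ℝ) ^ (-1 - γ) := by rw [Finset.mul_sum]
      _ ≤ C * ((1/γ) * (y:ℝ) ^ (-γ)) := by
          apply mul_le_mul_of_nonneg_left _ hC.le
          apply tail_finset hγ0 hγ1 hy1
          intro n hn
          rw [Finset.mem_Ico] at hn
          omega
      _ = (C / γ) * (y:ℝ) ^ (-γ) := by ring
  linarith [step4, htail]

theorem stmt_13 (r : ℕ) (hr : 1 ≤ r) (γ : ℝ) (hγ : γ = 1 / (r + 1))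
    (P : Set ℕ) (hP : ∀ p ∈ P, Nat.Prime p)
    (C : ℝ) (hC : 0 < C)
    (hPcount : ∀ x : ℕ, (2 : ℝ) ^ (1 / γ) ≤ x →
      ((P ∩ Set.Iic x).ncard : ℝ) ≤ C * (x : ℝ) ^ (r * γ) / Real.log x)
    (T : ℕ → ℝ) (hT1 : ∀ p, 1 ≤ T p)
    (hT : ∀ p : ℕ, p.Prime → p ∉ P → (p : ℝ) ^ γ ≤ T p) :
    ∃ C' : ℝ, 0 < C' ∧ ∃ y₀ : ℕ, ∀ y : ℕ, y₀ ≤ y →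
      Summable (fun p : {p : ℕ // p.Prime ∧ y < p} => 1 / ((p : ℝ) * T p)) ∧
      ∑' p : {p : ℕ // p.Prime ∧ y < p}, 1 / ((p : ℝ) * T p) ≤ C' * (y : ℝ) ^ (-γ) := by
  classical
  have hr1 : (1:ℝ) ≤ (r:ℝ) := by exact_mod_cast hr
  have hγ0 : 0 < γ := by rw [hγ]; positivity
  have hγ1 : γ ≤ 1 := by
    rw [hγ, div_le_one (by positivity)]; linarith
  have hγinv : 1/γ = (r:ℝ) + 1 := by
    rw [hγ]; field_simp
  have hrγ : (r:ℝ) * γ = 1 - γ := by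
    rw [hγ]; field_simp; ring
  refine ⟨C + C / γ + 1 / γ, by positivity, 2 ^ (r + 1), fun y hy => ?_⟩
  have hy1 : 1 ≤ y := by
    have : 1 ≤ 2 ^ (r+1) := Nat.one_le_two_pow
    omega
  -- key finite-sum bound
  have key : ∀ u : Finset {p : ℕ // p.Prime ∧ y < p},
      ∑ x ∈ u, 1 / ((x : ℝ) * T x) ≤ (C + C / γ + 1 / γ) * (y : ℝ) ^ (-γ) := by
    intro u
    set v := u.image (fun x : {p : ℕ // p.Prime ∧ y < p} => (x : ℕ)) with hv
    have hvP : ∀ p ∈ v, p.Prime ∧ y < p := by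
      intro p hp
      rw [hv, Finset.mem_image] at hp
      obtain ⟨x, _, rfl⟩ := hp
      exact x.2
    have hsum : ∑ x ∈ u, 1 / ((x : ℝ) * T x) = ∑ p ∈ v, 1 / ((p : ℝ) * T p) := by
      rw [hv, Finset.sum_image (fun a _ b _ h => Subtype.ext h)]
    have hpt : ∀ p ∈ v, 1 / ((p : ℝ) * T p)
        ≤ (if p ∈ P then ((p:ℝ))⁻¹ else 0) + (p:ℝ) ^ (-1 - γ) := by
      intro p hp
      obtain ⟨hprime, hyp⟩ := hvP p hp
      have hp2 : (2:ℝ) ≤ (p:ℝ) := by exact_mod_cast hprime.two_le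
      have hppos : (0:ℝ) < (p:ℝ) := by linarith
      have hTp : (0:ℝ) < T p := lt_of_lt_of_le one_pos (hT1 p)
      by_cases hPp : p ∈ P
      · rw [if_pos hPp]
        have h1 : 1 / ((p : ℝ) * T p) ≤ ((p:ℝ))⁻¹ := by
          rw [← one_div]
          apply one_div_le_one_div_of_le hppos
          nlinarith [hT1 p]
        have h2 : (0:ℝ) ≤ (p:ℝ) ^ (-1 - γ) := by positivity
        linarith
      · rw [if_neg hPp]
        have hTγ := hT p hprime hPp
        have h1 : 1 / ((p : ℝ) * T p) ≤ 1 / ((p:ℝ) * (p:ℝ) ^ γ) := by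
          apply one_div_le_one_div_of_le (by positivity)
          exact mul_le_mul_of_nonneg_left hTγ hppos.le
        have h2 : 1 / ((p:ℝ) * (p:ℝ) ^ γ) = (p:ℝ) ^ (-1 - γ) := by
          rw [show ((p:ℝ) * (p:ℝ) ^ γ) = (p:ℝ) ^ (1 + γ) by
            rw [Real.rpow_add hppos, Real.rpow_one],
            one_div, ← Real.rpow_neg hppos.le, show -(1 + γ) = -1 - γ by ring]
        rw [h2] at h1
        linarith
    have hsplit : ∑ p ∈ v, ((if p ∈ P then ((p:ℝ))⁻¹ else 0) + (p:ℝ) ^ (-1 - γ))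
        = (∑ p ∈ v.filter (fun p => p ∈ P), ((p:ℝ))⁻¹)
          + ∑ p ∈ v, (p:ℝ) ^ (-1 - γ) := by
      rw [Finset.sum_add_distrib, Finset.sum_filter]
    have hP1 : ∑ p ∈ v.filter (fun p => p ∈ P), ((p:ℝ))⁻¹
        ≤ (C + C / γ) * (y : ℝ) ^ (-γ) := by
      apply ppart hγ0 hγ1 hC P hPcount hrγ hγinv hr hy
      · intro p hp; exact (Finset.mem_filter.mp hp).2
      · intro p hp; exact (hvP p (Finset.filter_subset _ _ hp)).2
    have hP2 : ∑ p ∈ v, (p:ℝ) ^ (-1 - γ) ≤ (1 / γ) * (y : ℝ) ^ (-γ) :=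
      tail_finset hγ0 hγ1 hy1 v (fun p hp => (hvP p hp).2)
    calc ∑ x ∈ u, 1 / ((x : ℝ) * T x)
        = ∑ p ∈ v, 1 / ((p : ℝ) * T p) := hsum
      _ ≤ ∑ p ∈ v, ((if p ∈ P then ((p:ℝ))⁻¹ else 0) + (p:ℝ) ^ (-1 - γ)) :=
          Finset.sum_le_sum hpt
      _ = _ := hsplit
      _ ≤ (C + C / γ) * (y : ℝ) ^ (-γ) + (1 / γ) * (y : ℝ) ^ (-γ) := add_le_add hP1 hP2
      _ = (C + C / γ + 1 / γ) * (y : ℝ) ^ (-γ) := by ring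
  have hnn : ∀ x : {p : ℕ // p.Prime ∧ y < p}, 0 ≤ 1 / ((x : ℝ) * T x) := by
    intro x
    apply div_nonneg zero_le_one
    exact mul_nonneg (Nat.cast_nonneg _) (le_trans zero_le_one (hT1 _))
  have hsummable : Summable (fun p : {p : ℕ // p.Prime ∧ y < p} => 1 / ((p : ℝ) * T p)) :=
    summable_of_sum_le hnn key
  exact ⟨hsummable, Summable.tsum_le_of_sum_le hsummable key⟩
end

section
/- Let F be the Fibonacci sequence and z(p) the least positive integer n with p ∣ F(n) (the rank of apparition). Then for every prime p, z(p) ≤ p + 1. -/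
open Polynomial

section Aux

variable (p : ℕ) [Fact p.Prime]

private noncomputable def fibPoly : (ZMod p)[X] := X ^ 2 - X - 1

private lemma fibPoly_monic : (fibPoly p).Monic := by
  unfold fibPoly
  monicity!

private lemma fibPoly_degree : (fibPoly p).degree = 2 := by
  unfold fibPoly
  compute_degree!

private lemma key_lin_indep (a b : ZMod p)
    (h : algebraMap (ZMod p) (AdjoinRoot (fibPoly p)) a * AdjoinRoot.root (fibPoly p)
        + algebraMap (ZMod p) (AdjoinRoot (fibPoly p)) b = 0) : a = 0 ∧ b = 0 := by
  have hmon : (fibPoly p).Monic := fibPoly_monic p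
  have hg : AdjoinRoot.mk (fibPoly p) (C a * X + C b) = 0 := by
    rw [← AdjoinRoot.aeval_eq]
    simpa using h
  rw [AdjoinRoot.mk_eq_zero] at hg
  have hdeg : (C a * X + C b).degree < (fibPoly p).degree := by
    rw [fibPoly_degree]
    calc (C a * X + C b).degree ≤ max (C a * X).degree (C b).degree := Polynomial.degree_add_le _ _
      _ < 2 := by
        apply max_lt
        · exact lt_of_le_of_lt (Polynomial.degree_C_mul_X_le a) (by norm_num)
        · exact lt_of_le_of_lt (Polynomial.degree_C_le) (by norm_num)
  have hzero : C a * X + C b = 0 := by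
    by_contra h0
    exact hmon.not_dvd_of_degree_lt h0 hdeg hg
  constructor
  · have := congrArg (fun q => Polynomial.coeff q 1) hzero
    simpa using this
  · have := congrArg (fun q => Polynomial.coeff q 0) hzero
    simpa using this

private lemma algebraMap_inj :
    Function.Injective (algebraMap (ZMod p) (AdjoinRoot (fibPoly p))) := by
  intro x y hxy
  have h : algebraMap (ZMod p) (AdjoinRoot (fibPoly p)) 0 * AdjoinRoot.root (fibPoly p)
      + algebraMap (ZMod p) (AdjoinRoot (fibPoly p)) (x - y) = 0 := by
    rw [map_zero, zero_mul, zero_add, map_sub, sub_eq_zero]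
    exact hxy
  have := (key_lin_indep p 0 (x - y) h).2
  exact sub_eq_zero.mp this

private lemma charP_adjoin : CharP (AdjoinRoot (fibPoly p)) p :=
  charP_of_injective_algebraMap (algebraMap_inj p) p

private lemma root_sq : (AdjoinRoot.root (fibPoly p)) ^ 2 = AdjoinRoot.root (fibPoly p) + 1 := by
  have h0 : (aeval (AdjoinRoot.root (fibPoly p))) (X ^ 2 - X - 1 : (ZMod p)[X]) = 0 := by
    rw [show (X ^ 2 - X - 1 : (ZMod p)[X]) = fibPoly p from rfl,
      AdjoinRoot.aeval_eq, AdjoinRoot.mk_self]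
  have h : AdjoinRoot.root (fibPoly p) ^ 2 - AdjoinRoot.root (fibPoly p) - 1 = 0 := by
    simpa using h0
  linear_combination h

private lemma root_pow_fib (n : ℕ) :
    (AdjoinRoot.root (fibPoly p)) ^ (n + 1)
      = (Nat.fib (n + 1) : AdjoinRoot (fibPoly p)) * AdjoinRoot.root (fibPoly p)
        + (Nat.fib n : AdjoinRoot (fibPoly p)) := by
  induction n with
  | zero => simp
  | succ n ih =>
    rw [pow_succ, ih, Nat.fib_add_two]
    push_cast
    linear_combination ((Nat.fib (n + 1) : AdjoinRoot (fibPoly p))) * root_sq p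

end Aux

theorem stmt_15 (p : ℕ) (hp : p.Prime) :
    sInf {n : ℕ | 0 < n ∧ p ∣ Nat.fib n} ≤ p + 1 := by
  have hfact : Fact p.Prime := ⟨hp⟩
  suffices h : ∃ n, (0 < n ∧ p ∣ Nat.fib n) ∧ n ≤ p + 1 by
    obtain ⟨n, hn, hle⟩ := h
    exact le_trans (Nat.sInf_le hn) hle
  by_cases hp2 : p = 2
  · exact ⟨3, ⟨by norm_num, by rw [hp2]; decide⟩, by omega⟩
  by_cases hp5 : p = 5
  · exact ⟨5, ⟨by norm_num, by rw [hp5]; decide⟩, by omega⟩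
  have hp1 : 2 ≤ p := hp.two_le
  have h20 : (20 : ZMod p) ≠ 0 := by
    intro h
    have hdvd : p ∣ 20 := (ZMod.natCast_eq_zero_iff 20 p).mp (by push_cast; exact h)
    have hle : p ≤ 20 := Nat.le_of_dvd (by norm_num) hdvd
    interval_cases p <;> first
      | exact hp2 rfl
      | exact hp5 rfl
      | revert hp; decide
      | omega
  set R := AdjoinRoot (fibPoly p) with hR
  have hchar : CharP R p := charP_adjoin p
  set α := AdjoinRoot.root (fibPoly p) with hα
  have hsq : α ^ 2 = α + 1 := root_sq p
  have hfrob : (α ^ p) ^ 2 = α ^ p + 1 := by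
    calc (α ^ p) ^ 2 = (α ^ 2) ^ p := by rw [← pow_mul, ← pow_mul, Nat.mul_comm]
    _ = (α + 1) ^ p := by rw [hsq]
    _ = α ^ p + 1 := by rw [add_pow_char, one_pow]
  have hexp : α ^ p = (Nat.fib p : R) * α + (Nat.fib (p - 1) : R) := by
    have := root_pow_fib p (p - 1)
    rw [Nat.sub_add_cancel (by omega)] at this
    exact this
  have hkey : ((Nat.fib p : ZMod p) ^ 2 + 2 * (Nat.fib p : ZMod p) * (Nat.fib (p - 1) : ZMod p)
        - (Nat.fib p : ZMod p)) = 0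
      ∧ ((Nat.fib p : ZMod p) ^ 2 + (Nat.fib (p - 1) : ZMod p) ^ 2
        - (Nat.fib (p - 1) : ZMod p) - 1) = 0 := by
    apply key_lin_indep p
    have expand : ((Nat.fib p : R) * α + (Nat.fib (p - 1) : R)) ^ 2
        = ((Nat.fib p : R) * α + (Nat.fib (p - 1) : R)) + 1 := by
      rw [← hexp]; exact hfrob
    simp only [map_sub, map_add, map_mul, map_pow, map_one, map_ofNat, map_natCast]
    linear_combination expand - (Nat.fib p : R) ^ 2 * hsq
  obtain ⟨heq1, heq2⟩ := hkey
  set a : ZMod p := (Nat.fib p : ZMod p) with ha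
  set b : ZMod p := (Nat.fib (p - 1) : ZMod p) with hb
  have hcast : ∀ n : ℕ, (Nat.fib n : ZMod p) = 0 → p ∣ Nat.fib n := fun n h =>
    (ZMod.natCast_eq_zero_iff _ _).mp h
  by_cases haz : a = 0
  · exact ⟨p, ⟨hp.pos, hcast p haz⟩, by omega⟩
  have h2b : a + 2 * b - 1 = 0 := by
    have hfac : a * (a + 2 * b - 1) = 0 := by linear_combination heq1
    rcases mul_eq_zero.mp hfac with h | h
    · exact absurd h haz
    · exact h
  have hprod : b * (a + b) = 0 := by
    have h20' : (20 : ZMod p) * (b * (a + b)) = 0 := by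
      linear_combination (4 * a + 12 * b + 4) * h2b - 4 * heq2
    rcases mul_eq_zero.mp h20' with h | h
    · exact absurd h h20
    · exact h
  rcases mul_eq_zero.mp hprod with h | h
  · refine ⟨p - 1, ⟨by omega, hcast _ h⟩, by omega⟩
  · refine ⟨p + 1, ⟨by omega, hcast _ ?_⟩, le_refl _⟩
    rw [Nat.fib_add_one (by omega)]
    push_cast
    linear_combination h
end
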